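/- With the product ⊙ as above, define a linear functional τ on A by τ(f) = f(e) (the coefficient of the empty word). Then for all words a, b in the free monoid M on {α, β}, τ(a ⊙ b̄) = 1 if a = b and 0 otherwise. -/

import Mathlib

/-- Words on the alphabet `{α, β}`, encoded as lists of booleans. -/
abbrev Wd := List Bool

/-- The reverse-and-swap involution `x ↦ x̄`. -/
def bar (w : Wd) : Wd := (w.map not).reverse

/-- `x ⊙ y = ∑_{x = a·g, y = ḡ·b} a·b` for words `x, y`. -/
noncomputable def wp (x y : Wd) : Wd →₀ ℂ :=
  ∑ k ∈ Finset.range (min x.length y.length + 1),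
    if y.take k = bar (x.drop (x.length - k))
    then Finsupp.single (x.take (x.length - k) ++ y.drop k) (1 : ℂ) else 0

/-- The bilinear extension of `⊙` to the free vector space on words. -/
noncomputable def odot (f g : Wd →₀ ℂ) : Wd →₀ ℂ :=
  f.sum fun x cx => g.sum fun y cy => (cx * cy) • wp x y

lemma bar_length (w : Wd) : (bar w).length = w.length := by simp [bar]

lemma bar_bar (w : Wd) : bar (bar w) = w := by
  simp [bar, List.map_reverse, List.map_map, Function.comp_def]

lemma bar_inj : Function.Injective bar := by
  intro x y h
  have := congrArg bar h
  rwa [bar_bar, bar_bar] at this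

lemma wp_nil (x y : Wd) : wp x y [] = if y = bar x then 1 else 0 := by
  unfold wp
  rw [Finsupp.finset_sum_apply]
  have key : ∀ k ∈ Finset.range (min x.length y.length + 1),
      ((if y.take k = bar (x.drop (x.length - k))
        then Finsupp.single (x.take (x.length - k) ++ y.drop k) (1 : ℂ) else 0) ([] : Wd))
      = if k = x.length ∧ y = bar x then 1 else 0 := by
    intro k hk
    simp only [Finset.mem_range, Nat.lt_succ_iff, le_min_iff] at hk
    obtain ⟨hkx, hky⟩ := hk
    by_cases hx : k = x.length
    · subst hx
      simp only [Nat.sub_self, List.drop_zero, List.take_zero, List.nil_append, true_and]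
      by_cases hlen : y.length = x.length
      · rw [List.take_of_length_le hlen.le, List.drop_eq_nil_of_le hlen.le]
        by_cases hy : y = bar x
        · simp [hy]
        · simp [hy]
      · have hylen : x.length < y.length := lt_of_le_of_ne hky (fun h => hlen h.symm)
        have hdrop : y.drop x.length ≠ [] := by
          intro h
          have := congrArg List.length h
          simp at this
          omega
        have hy : y ≠ bar x := by
          intro h
          apply hlen
          rw [h, bar_length]
        simp only [hy, if_false]
        split
        · rw [Finsupp.single_apply, if_neg hdrop]
        · rfl
    · have htake : x.take (x.length - k) ≠ [] := by
        intro h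
        have := congrArg List.length h
        simp at this
        omega
      have hne : x.take (x.length - k) ++ y.drop k ≠ [] := by simp [htake]
      simp only [hx, false_and, if_false]
      split
      · rw [Finsupp.single_apply, if_neg hne]
      · rfl
  rw [Finset.sum_congr rfl key]
  by_cases hy : y = bar x
  · have hlen : y.length = x.length := by rw [hy, bar_length]
    simp only [hy, and_true]
    rw [Finset.sum_ite_eq' (Finset.range _) x.length (fun _ => (1:ℂ))]
    simp [hlen, bar_length]
  · simp [hy]

/-- `τ(a ⊙ b̄) = δ_{a,b}` where `τ` extracts the coefficient of the empty word. -/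
theorem stmt7 (a b : Wd) :
    (odot (Finsupp.single a (1 : ℂ)) (Finsupp.single (bar b) (1 : ℂ))) ([] : Wd)
      = if a = b then 1 else 0 := by
  unfold odot
  rw [Finsupp.sum_single_index (by simp), Finsupp.sum_single_index (by simp)]
  simp only [one_mul, one_smul]
  rw [wp_nil]
  by_cases h : a = b
  · simp [h]
  · rw [if_neg (fun hh => h (bar_inj hh.symm)), if_neg h]
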